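/- For every μ > 0 there exists a probability measure π on ℝ × ℝ (the sticky coupling) whose first marginal is the Gaussian measure N(−μ,1), whose second marginal is N(μ,1), such that π({(x,y) : x ≤ y}) = 1 (monotonicity) and π({(x,y) : x = y}) = 1 − erf(μ/√2) (optimality: the probability of disagreement equals the total variation distance between N(−μ,1) and N(μ,1)). -/

import Mathlib

open MeasureTheory ProbabilityTheory Set
open scoped ENNReal

/-- `erf(x)`: the probability that a centered Gaussian of variance `1/2` lies in `[−x,x]`,
i.e. `(2/√π)∫₀ˣ e^{−u²} du`. -/
noncomputable def erf (x : ℝ) : ℝ := 2 / Real.sqrt Real.pi * ∫ u in (0 : ℝ)..x, Real.exp (-u ^ 2)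

lemma sticky_pdf01 (x : ℝ) :
    gaussianPDFReal 0 1 x = (Real.sqrt (2 * Real.pi))⁻¹ * Real.exp (-x ^ 2 / 2) := by
  simp [gaussianPDFReal]

lemma sticky_erf_eq_intInt (μ : ℝ) :
    ∫ x in (-μ)..μ, gaussianPDFReal 0 1 x = erf (μ / Real.sqrt 2) := by
  have h2 : Real.sqrt 2 ≠ 0 := by positivity
  have hhalf : ∀ x : ℝ, Real.exp (-(x / Real.sqrt 2) ^ 2) = Real.exp (-x ^ 2 / 2) := by
    intro x
    rw [div_pow, Real.sq_sqrt (by norm_num : (0:ℝ) ≤ 2)]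
    ring_nf
  have hsub : ∫ x in (0:ℝ)..μ, Real.exp (-x ^ 2 / 2)
      = Real.sqrt 2 * ∫ u in (0:ℝ)..(μ / Real.sqrt 2), Real.exp (-u ^ 2) := by
    have := intervalIntegral.integral_comp_div (a := 0) (b := μ)
      (fun u => Real.exp (-u ^ 2)) h2
    simp only [hhalf] at this
    simpa [smul_eq_mul] using this
  have heven : ∫ x in (-μ)..(0:ℝ), gaussianPDFReal 0 1 x
      = ∫ x in (0:ℝ)..μ, gaussianPDFReal 0 1 x := by
    have := intervalIntegral.integral_comp_neg (a := (0:ℝ)) (b := μ) (gaussianPDFReal 0 1)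
    simp only [neg_zero] at this
    rw [← this]
    congr 1
    ext x
    simp [gaussianPDFReal]
  have hint : ∀ a b : ℝ, IntervalIntegrable (gaussianPDFReal 0 1) volume a b :=
    fun a b => (integrable_gaussianPDFReal 0 1).intervalIntegrable
  have hsplit : ∫ x in (-μ)..μ, gaussianPDFReal 0 1 x
      = (∫ x in (-μ)..(0:ℝ), gaussianPDFReal 0 1 x) + ∫ x in (0:ℝ)..μ, gaussianPDFReal 0 1 x :=
    (intervalIntegral.integral_add_adjacent_intervals (hint _ _) (hint _ _)).symm
  rw [hsplit, heven, ← two_mul]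
  simp only [sticky_pdf01]
  rw [intervalIntegral.integral_const_mul, hsub, erf]
  rw [Real.sqrt_mul (by norm_num : (0:ℝ) ≤ 2)]
  have hpi : Real.sqrt Real.pi ≠ 0 := by positivity
  field_simp

lemma sticky_transl (m : ℝ) :
    ∫ x in Iic (0:ℝ), gaussianPDFReal 0 1 (x + m) = ∫ x in Iic m, gaussianPDFReal 0 1 x := by
  have h := (measurePreserving_add_right (volume : Measure ℝ) m).setIntegral_preimage_emb
    (MeasurableEquiv.addRight m).measurableEmbedding (gaussianPDFReal 0 1) (Iic m)
  have hpre : (· + m) ⁻¹' (Iic m) = Iic (0:ℝ) := by ext x; simp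
  rw [← hpre]; exact h

lemma sticky_key_integral (μ : ℝ) :
    ∫ x in Iic (0:ℝ), (gaussianPDFReal (-μ) 1 x - gaussianPDFReal μ 1 x)
      = erf (μ / Real.sqrt 2) := by
  have hi1 : IntegrableOn (gaussianPDFReal (-μ) 1) (Iic 0) volume :=
    (integrable_gaussianPDFReal _ _).restrict
  have hi2 : IntegrableOn (gaussianPDFReal μ 1) (Iic 0) volume :=
    (integrable_gaussianPDFReal _ _).restrict
  rw [integral_sub hi1 hi2]
  have e1 : ∀ x : ℝ, gaussianPDFReal (-μ) 1 x = gaussianPDFReal 0 1 (x + μ) := by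
    intro x; rw [gaussianPDFReal_add]; ring_nf
  have e2 : ∀ x : ℝ, gaussianPDFReal μ 1 x = gaussianPDFReal 0 1 (x + (-μ)) := by
    intro x; rw [gaussianPDFReal_add]; ring_nf
  simp only [e1, e2]
  rw [sticky_transl μ, sticky_transl (-μ)]
  rw [intervalIntegral.integral_Iic_sub_Iic ((integrable_gaussianPDFReal _ _).restrict)
    ((integrable_gaussianPDFReal _ _).restrict)]
  exact sticky_erf_eq_intInt μ

lemma sticky_erf_pos {μ : ℝ} (hμ : 0 < μ) : 0 < erf (μ / Real.sqrt 2) := by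
  have h2 : 0 < μ / Real.sqrt 2 := by positivity
  have hI : 0 < ∫ u in (0:ℝ)..(μ / Real.sqrt 2), Real.exp (-u ^ 2) := by
    apply intervalIntegral.intervalIntegral_pos_of_pos
    · exact (Real.continuous_exp.comp (by continuity)).intervalIntegrable _ _
    · intro x; positivity
    · exact h2
  have : (0:ℝ) < 2 / Real.sqrt Real.pi := by positivity
  exact mul_pos this hI

lemma sticky_pdf_le {μ : ℝ} (hμ : 0 < μ) {x : ℝ} (hx : x ≤ 0) :
    gaussianPDFReal μ 1 x ≤ gaussianPDFReal (-μ) 1 x := by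
  simp only [gaussianPDFReal, NNReal.coe_one, mul_one]
  apply mul_le_mul_of_nonneg_left _ (by positivity)
  apply Real.exp_le_exp.mpr
  nlinarith

lemma sticky_pdf_le' {μ : ℝ} (hμ : 0 < μ) {x : ℝ} (hx : 0 < x) :
    gaussianPDFReal (-μ) 1 x ≤ gaussianPDFReal μ 1 x := by
  simp only [gaussianPDFReal, NNReal.coe_one, mul_one]
  apply mul_le_mul_of_nonneg_left _ (by positivity)
  apply Real.exp_le_exp.mpr
  nlinarith

/-- Existence of the sticky coupling of `N(−μ,1)` and `N(μ,1)`: a monotone coupling for which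
the probability of disagreement equals the total-variation distance `erf(μ/√2)` between the
two Gaussians. -/
theorem sticky_coupling_exists (μ : ℝ) (hμ : 0 < μ) :
    ∃ π : Measure (ℝ × ℝ), IsProbabilityMeasure π ∧
      π.map Prod.fst = gaussianReal (-μ) 1 ∧
      π.map Prod.snd = gaussianReal μ 1 ∧
      π {p : ℝ × ℝ | p.1 ≤ p.2} = 1 ∧
      π {p : ℝ × ℝ | p.1 = p.2} = ENNReal.ofReal (1 - erf (μ / Real.sqrt 2)) := by
  classical
  set f : ℝ → ℝ := gaussianPDFReal (-μ) 1 with hf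
  set g : ℝ → ℝ := gaussianPDFReal μ 1 with hg
  set εr : ℝ := erf (μ / Real.sqrt 2) with hεr
  set dm : ℝ → ℝ≥0∞ :=
    (Iic (0:ℝ)).indicator (fun x => ENNReal.ofReal (g x))
      + (Ioi (0:ℝ)).indicator (fun x => ENNReal.ofReal (f x)) with hdm
  set d1 : ℝ → ℝ≥0∞ := (Iic (0:ℝ)).indicator (fun x => ENNReal.ofReal (f x - g x)) with hd1
  set d2 : ℝ → ℝ≥0∞ := (Ioi (0:ℝ)).indicator (fun x => ENNReal.ofReal (g x - f x)) with hd2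
  have hmf : Measurable f := measurable_gaussianPDFReal _ _
  have hmg : Measurable g := measurable_gaussianPDFReal _ _
  have hmdm : Measurable dm :=
    ((hmg.ennreal_ofReal).indicator measurableSet_Iic).add
      ((hmf.ennreal_ofReal).indicator measurableSet_Ioi)
  have hmd1 : Measurable d1 := ((hmf.sub hmg).ennreal_ofReal).indicator measurableSet_Iic
  have hmd2 : Measurable d2 := ((hmg.sub hmf).ennreal_ofReal).indicator measurableSet_Ioi
  set m : Measure ℝ := volume.withDensity dm with hm
  set ν₁ : Measure ℝ := volume.withDensity d1 with hν₁
  set ν₂ : Measure ℝ := volume.withDensity d2 with hν₂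
  -- decomposition of the two gaussians
  have hP : gaussianReal (-μ) 1 = m + ν₁ := by
    rw [gaussianReal_of_var_ne_zero _ one_ne_zero, hm, hν₁, ← withDensity_add_left hmdm]
    congr 1
    funext x
    by_cases hx : x ≤ 0
    · have hx' : x ∉ Ioi (0:ℝ) := by simpa using hx
      simp only [Pi.add_apply, hdm, hd1, gaussianPDF,
        indicator_of_mem (mem_Iic.mpr hx), indicator_of_notMem hx', add_zero]
      rw [← ENNReal.ofReal_add (gaussianPDFReal_nonneg _ _ _)
        (sub_nonneg.mpr (sticky_pdf_le hμ hx))]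
      ring_nf
    · push_neg at hx
      have hx' : x ∉ Iic (0:ℝ) := by simpa using hx
      simp only [Pi.add_apply, hdm, hd1, gaussianPDF,
        indicator_of_notMem hx', indicator_of_mem (mem_Ioi.mpr hx), zero_add, add_zero]
      rfl
  have hQ : gaussianReal μ 1 = m + ν₂ := by
    rw [gaussianReal_of_var_ne_zero _ one_ne_zero, hm, hν₂, ← withDensity_add_left hmdm]
    congr 1
    funext x
    by_cases hx : x ≤ 0
    · have hx' : x ∉ Ioi (0:ℝ) := by simpa using hx
      simp only [Pi.add_apply, hdm, hd2, gaussianPDF,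
        indicator_of_mem (mem_Iic.mpr hx), indicator_of_notMem hx', add_zero]
      rfl
    · push_neg at hx
      have hx' : x ∉ Iic (0:ℝ) := by simpa using hx
      simp only [Pi.add_apply, hdm, hd2, gaussianPDF,
        indicator_of_notMem hx', indicator_of_mem (mem_Ioi.mpr hx), zero_add]
      rw [← ENNReal.ofReal_add (gaussianPDFReal_nonneg _ _ _)
        (sub_nonneg.mpr (sticky_pdf_le' hμ hx))]
      ring_nf
  -- total masses
  set ε : ℝ≥0∞ := ENNReal.ofReal εr with hε
  have hε0 : ε ≠ 0 := by
    simp only [hε, ne_eq, ENNReal.ofReal_eq_zero, not_le]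
    exact sticky_erf_pos hμ
  have hεtop : ε ≠ ∞ := ENNReal.ofReal_ne_top
  have hν₁univ : ν₁ univ = ε := by
    have hofr := ofReal_integral_eq_lintegral_ofReal (μ := volume.restrict (Iic (0:ℝ)))
      (f := fun x => f x - g x)
      ((integrable_gaussianPDFReal (-μ) 1).sub (integrable_gaussianPDFReal μ 1)).restrict
      ((ae_restrict_iff' measurableSet_Iic).mpr (ae_of_all _ fun x hx =>
        sub_nonneg.mpr (sticky_pdf_le hμ hx)))
    rw [hν₁, withDensity_apply _ MeasurableSet.univ, Measure.restrict_univ, hd1,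
      lintegral_indicator measurableSet_Iic, ← hofr, hε, hεr]
    congr 1
    exact sticky_key_integral μ
  have h1 : m univ + ν₁ univ = 1 := by
    rw [← Measure.add_apply, ← hP]; exact measure_univ
  have h2 : m univ + ν₂ univ = 1 := by
    rw [← Measure.add_apply, ← hQ]; exact measure_univ
  have hmle : m univ ≤ 1 := by
    rw [← h1]; exact self_le_add_right _ _
  have hmtop : m univ ≠ ∞ := (lt_of_le_of_lt hmle ENNReal.one_lt_top).ne
  have hν₂univ : ν₂ univ = ε := by
    have h3 : m univ + ν₂ univ = m univ + ν₁ univ := h2.trans h1.symm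
    rw [(ENNReal.add_right_inj hmtop).mp h3, hν₁univ]
  have hmuniv : m univ = 1 - ε := by
    rw [hν₁univ] at h1
    exact ENNReal.eq_sub_of_add_eq hεtop h1
  have hm1ε : (1:ℝ≥0∞) - ε = ENNReal.ofReal (1 - εr) := by
    rw [ENNReal.ofReal_sub _ (le_of_lt (sticky_erf_pos hμ)), ENNReal.ofReal_one, hε]
  haveI : IsFiniteMeasure ν₁ := ⟨by rw [hν₁univ]; exact ENNReal.ofReal_lt_top⟩
  haveI : IsFiniteMeasure ν₂ := ⟨by rw [hν₂univ]; exact ENNReal.ofReal_lt_top⟩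
  haveI : IsFiniteMeasure m := ⟨lt_of_le_of_lt hmle ENNReal.one_lt_top⟩
  have hdiag : Measurable fun x : ℝ => (x, x) := measurable_id.prodMk measurable_id
  set π : Measure (ℝ × ℝ) := m.map (fun x => (x, x)) + ε⁻¹ • (ν₁.prod ν₂) with hπ
  have hfstcomp : Prod.fst ∘ (fun x : ℝ => (x, x)) = id := rfl
  have hsndcomp : Prod.snd ∘ (fun x : ℝ => (x, x)) = id := rfl
  have hfst : π.map Prod.fst = gaussianReal (-μ) 1 := by
    rw [hπ, Measure.map_add _ _ measurable_fst, Measure.map_smul,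
      Measure.map_map measurable_fst hdiag, hfstcomp, Measure.map_id,
      Measure.map_fst_prod, hν₂univ, smul_smul,
      ENNReal.inv_mul_cancel hε0 hεtop, one_smul, hP]
  have hsnd : π.map Prod.snd = gaussianReal μ 1 := by
    rw [hπ, Measure.map_add _ _ measurable_snd, Measure.map_smul,
      Measure.map_map measurable_snd hdiag, hsndcomp, Measure.map_id,
      Measure.map_snd_prod, hν₁univ, smul_smul,
      ENNReal.inv_mul_cancel hε0 hεtop, one_smul, hQ]
  have hπuniv : π univ = 1 := by
    rw [hπ, Measure.add_apply, Measure.smul_apply,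
      Measure.map_apply hdiag MeasurableSet.univ, preimage_univ,
      ← univ_prod_univ, Measure.prod_prod, hν₁univ, hν₂univ, smul_eq_mul,
      ← mul_assoc, ENNReal.inv_mul_cancel hε0 hεtop, one_mul]
    rw [hν₁univ] at h1
    exact h1
  have hprob : IsProbabilityMeasure π := ⟨hπuniv⟩
  -- the sets
  have hSmeas : MeasurableSet {p : ℝ × ℝ | p.1 ≤ p.2} :=
    measurableSet_le measurable_fst measurable_snd
  have hν₁c : ν₁ ((Iic (0:ℝ))ᶜ) = 0 := by
    rw [hν₁, withDensity_apply _ measurableSet_Iic.compl, hd1,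
      setLIntegral_congr_fun measurableSet_Iic.compl
        (fun x (hx : x ∈ (Iic (0:ℝ))ᶜ) =>
          indicator_of_notMem hx (fun x => ENNReal.ofReal (f x - g x)))]
    simp
  have hν₂c : ν₂ ((Ioi (0:ℝ))ᶜ) = 0 := by
    rw [hν₂, withDensity_apply _ measurableSet_Ioi.compl, hd2,
      setLIntegral_congr_fun measurableSet_Ioi.compl
        (fun x (hx : x ∈ (Ioi (0:ℝ))ᶜ) =>
          indicator_of_notMem hx (fun x => ENNReal.ofReal (g x - f x)))]
    simp
  have hprodc : (ν₁.prod ν₂) ({p : ℝ × ℝ | p.1 ≤ p.2}ᶜ) = 0 := by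
    have hsub : {p : ℝ × ℝ | p.1 ≤ p.2}ᶜ ⊆ ((Iic (0:ℝ))ᶜ ×ˢ univ) ∪ (univ ×ˢ (Ioi (0:ℝ))ᶜ) := by
      intro p hp
      simp only [mem_compl_iff, mem_setOf_eq, not_le] at hp
      by_cases h1 : p.1 ≤ 0
      · right
        refine ⟨mem_univ _, ?_⟩
        simp only [mem_compl_iff, mem_Ioi, not_lt]
        exact le_of_lt (lt_of_lt_of_le hp h1)
      · left
        exact ⟨by simpa using h1, mem_univ _⟩
    refine le_antisymm (le_trans (measure_mono hsub) ?_) zero_le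
    refine le_trans (measure_union_le _ _) ?_
    rw [Measure.prod_prod, Measure.prod_prod, hν₁c, hν₂c]
    simp
  have hmono : π {p : ℝ × ℝ | p.1 ≤ p.2} = 1 := by
    have hc : π ({p : ℝ × ℝ | p.1 ≤ p.2}ᶜ) = 0 := by
      rw [hπ, Measure.add_apply, Measure.smul_apply,
        Measure.map_apply hdiag hSmeas.compl]
      have hpre : (fun x : ℝ => (x, x)) ⁻¹' ({p : ℝ × ℝ | p.1 ≤ p.2}ᶜ) = ∅ := by
        ext x; simp
      rw [hpre, hprodc]
      simp
    have := measure_add_measure_compl (μ := π) hSmeas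
    rw [hc, add_zero, hπuniv] at this
    exact this
  have hDmeas : MeasurableSet {p : ℝ × ℝ | p.1 = p.2} :=
    measurableSet_eq_fun measurable_fst measurable_snd
  have hdiagset : π {p : ℝ × ℝ | p.1 = p.2} = ENNReal.ofReal (1 - εr) := by
    rw [hπ, Measure.add_apply, Measure.smul_apply,
      Measure.map_apply hdiag hDmeas]
    have hpre : (fun x : ℝ => (x, x)) ⁻¹' {p : ℝ × ℝ | p.1 = p.2} = univ := by
      ext x; simp
    have hprodD : (ν₁.prod ν₂) {p : ℝ × ℝ | p.1 = p.2} = 0 := by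
      rw [Measure.prod_apply hDmeas]
      have hfib : ∀ x : ℝ, (Prod.mk x ⁻¹' {p : ℝ × ℝ | p.1 = p.2}) = {x} := by
        intro x; ext y; simp [eq_comm]
      have hzero : ∀ x : ℝ, ν₂ (Prod.mk x ⁻¹' {p : ℝ × ℝ | p.1 = p.2}) = 0 := by
        intro x
        rw [hfib x, hν₂]
        exact withDensity_absolutelyContinuous volume d2 (measure_singleton x)
      simp only [hzero]
      simp
    rw [hpre, hprodD, hmuniv, hm1ε]
    simp
  exact ⟨π, hprob, hfst, hsnd, hmono, hdiagset⟩
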